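/- Let Ω₀ = {P₁,P₂,P₃,P₄} as in the Demyanov–Ryabova counterexample. For any g = (g_x,g_y) with g_x > 0 and g_y > 2g_x, the polytope P_{Ω₀}(g) equals conv{(-1,1),(1,2),(2,0)}. -/
import Mathlib

open Set

noncomputable section

/-- Standard inner product on ℝ². -/
def dot2 (v g : ℝ × ℝ) : ℝ := v.1 * g.1 + v.2 * g.2

/-- Argmax of the linear functional ⟨·,g⟩ over P. -/
def argmax2 (P : Set (ℝ × ℝ)) (g : ℝ × ℝ) : Set (ℝ × ℝ) :=
  {v ∈ P | ∀ u ∈ P, dot2 u g ≤ dot2 v g}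

/-- P_Ω(g) = conv ⋃_{P∈Ω} Argmax_{v∈P}⟨v,g⟩. -/
def polyConv (Ω : Set (Set (ℝ × ℝ))) (g : ℝ × ℝ) : Set (ℝ × ℝ) :=
  convexHull ℝ (⋃ P ∈ Ω, argmax2 P g)

def P1 : Set (ℝ × ℝ) := convexHull ℝ {(1, 0), (1, 1), (-1, 0)}
def P2 : Set (ℝ × ℝ) := convexHull ℝ {(-1, 0), (-1, 1), (1, 0)}
def P3 : Set (ℝ × ℝ) := convexHull ℝ {(1, 2), (-1, 2), (0, 0)}
def P4 : Set (ℝ × ℝ) := convexHull ℝ {(2, 0), (-2, 0)}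

def Ω0 : Set (Set (ℝ × ℝ)) := {P1, P2, P3, P4}

/-- Reflection through the y-axis. -/
def σ2 : ℝ × ℝ → ℝ × ℝ := fun p => (-p.1, p.2)

lemma lin2 (a b : ℝ) : IsLinearMap ℝ (fun u : ℝ × ℝ => a * u.1 + b * u.2) := by
  constructor
  · intro x y; simp; ring
  · intro c x; simp [smul_eq_mul]; ring

lemma hull_le {s : Set (ℝ × ℝ)} (a b c : ℝ) (h : ∀ v ∈ s, a * v.1 + b * v.2 ≤ c) :
    ∀ u ∈ convexHull ℝ s, a * u.1 + b * u.2 ≤ c := by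
  have := convexHull_min h (convex_halfSpace_le (lin2 a b) c)
  exact fun u hu => this hu

lemma arg1 (g : ℝ × ℝ) (hx : 0 < g.1) (hy : 2 * g.1 < g.2) :
    argmax2 P1 g = {((1:ℝ), (1:ℝ))} := by
  have hv : ((1:ℝ), (1:ℝ)) ∈ P1 := subset_convexHull ℝ _ (by simp)
  have hub : ∀ u ∈ P1, dot2 u g ≤ dot2 (1, 1) g := by
    intro u hu
    have := hull_le g.1 g.2 (g.1 + g.2) (fun v hv => by
      simp only [Set.mem_insert_iff, Set.mem_singleton_iff] at hv
      rcases hv with rfl | rfl | rfl <;> simp <;> nlinarith) u hu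
    simp only [dot2]; nlinarith
  ext u
  constructor
  · rintro ⟨hu, hmax⟩
    have h1 : u.1 ≤ 1 := by
      have := hull_le (s := {((1:ℝ),(0:ℝ)), (1,1), (-1,0)}) 1 0 1 (fun v hv => by
        simp only [Set.mem_insert_iff, Set.mem_singleton_iff] at hv
        rcases hv with rfl | rfl | rfl <;> norm_num) u hu
      linarith
    have h2 : u.2 ≤ 1 := by
      have := hull_le (s := {((1:ℝ),(0:ℝ)), (1,1), (-1,0)}) 0 1 1 (fun v hv => by
        simp only [Set.mem_insert_iff, Set.mem_singleton_iff] at hv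
        rcases hv with rfl | rfl | rfl <;> norm_num) u hu
      linarith
    have hge : dot2 (1, 1) g ≤ dot2 u g := hmax _ hv
    simp only [dot2] at hge
    have e1 : u.1 = 1 := by nlinarith
    have e2 : u.2 = 1 := by nlinarith
    exact Prod.ext e1 e2
  · rintro rfl; exact ⟨hv, hub⟩

lemma arg2 (g : ℝ × ℝ) (hx : 0 < g.1) (hy : 2 * g.1 < g.2) :
    argmax2 P2 g = {((-1:ℝ), (1:ℝ))} := by
  have hv : ((-1:ℝ), (1:ℝ)) ∈ P2 := subset_convexHull ℝ _ (by simp)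
  have hub : ∀ u ∈ P2, dot2 u g ≤ dot2 (-1, 1) g := by
    intro u hu
    have := hull_le g.1 g.2 (-g.1 + g.2) (fun v hv => by
      simp only [Set.mem_insert_iff, Set.mem_singleton_iff] at hv
      rcases hv with rfl | rfl | rfl <;> simp <;> nlinarith) u hu
    simp only [dot2]; nlinarith
  ext u
  constructor
  · rintro ⟨hu, hmax⟩
    have h1 : u.1 + 2 * u.2 ≤ 1 := by
      have := hull_le (s := {((-1:ℝ),(0:ℝ)), (-1,1), (1,0)}) 1 2 1 (fun v hv => by
        simp only [Set.mem_insert_iff, Set.mem_singleton_iff] at hv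
        rcases hv with rfl | rfl | rfl <;> norm_num) u hu
      linarith
    have h2 : u.2 ≤ 1 := by
      have := hull_le (s := {((-1:ℝ),(0:ℝ)), (-1,1), (1,0)}) 0 1 1 (fun v hv => by
        simp only [Set.mem_insert_iff, Set.mem_singleton_iff] at hv
        rcases hv with rfl | rfl | rfl <;> norm_num) u hu
      linarith
    have hge : dot2 (-1, 1) g ≤ dot2 u g := hmax _ hv
    simp only [dot2] at hge
    have e2 : u.2 = 1 := by nlinarith
    have e1 : u.1 = -1 := by nlinarith
    exact Prod.ext e1 e2
  · rintro rfl; exact ⟨hv, hub⟩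

lemma arg3 (g : ℝ × ℝ) (hx : 0 < g.1) (hy : 2 * g.1 < g.2) :
    argmax2 P3 g = {((1:ℝ), (2:ℝ))} := by
  have hv : ((1:ℝ), (2:ℝ)) ∈ P3 := subset_convexHull ℝ _ (by simp)
  have hub : ∀ u ∈ P3, dot2 u g ≤ dot2 (1, 2) g := by
    intro u hu
    have := hull_le g.1 g.2 (g.1 + 2 * g.2) (fun v hv => by
      simp only [Set.mem_insert_iff, Set.mem_singleton_iff] at hv
      rcases hv with rfl | rfl | rfl <;> simp <;> nlinarith) u hu
    simp only [dot2]; nlinarith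
  ext u
  constructor
  · rintro ⟨hu, hmax⟩
    have h1 : u.1 ≤ 1 := by
      have := hull_le (s := {((1:ℝ),(2:ℝ)), (-1,2), (0,0)}) 1 0 1 (fun v hv => by
        simp only [Set.mem_insert_iff, Set.mem_singleton_iff] at hv
        rcases hv with rfl | rfl | rfl <;> norm_num) u hu
      linarith
    have h2 : u.2 ≤ 2 := by
      have := hull_le (s := {((1:ℝ),(2:ℝ)), (-1,2), (0,0)}) 0 1 2 (fun v hv => by
        simp only [Set.mem_insert_iff, Set.mem_singleton_iff] at hv
        rcases hv with rfl | rfl | rfl <;> norm_num) u hu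
      linarith
    have hge : dot2 (1, 2) g ≤ dot2 u g := hmax _ hv
    simp only [dot2] at hge
    have e1 : u.1 = 1 := by nlinarith
    have e2 : u.2 = 2 := by nlinarith
    exact Prod.ext e1 e2
  · rintro rfl; exact ⟨hv, hub⟩

lemma arg4 (g : ℝ × ℝ) (hx : 0 < g.1) (hy : 2 * g.1 < g.2) :
    argmax2 P4 g = {((2:ℝ), (0:ℝ))} := by
  have hv : ((2:ℝ), (0:ℝ)) ∈ P4 := subset_convexHull ℝ _ (by simp)
  have hub : ∀ u ∈ P4, dot2 u g ≤ dot2 (2, 0) g := by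
    intro u hu
    have := hull_le g.1 g.2 (2 * g.1) (fun v hv => by
      simp only [Set.mem_insert_iff, Set.mem_singleton_iff] at hv
      rcases hv with rfl | rfl <;> simp <;> nlinarith) u hu
    simp only [dot2]; nlinarith
  ext u
  constructor
  · rintro ⟨hu, hmax⟩
    have h1 : u.1 ≤ 2 := by
      have := hull_le (s := {((2:ℝ),(0:ℝ)), (-2,0)}) 1 0 2 (fun v hv => by
        simp only [Set.mem_insert_iff, Set.mem_singleton_iff] at hv
        rcases hv with rfl | rfl <;> norm_num) u hu
      linarith
    have h2 : u.2 ≤ 0 := by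
      have := hull_le (s := {((2:ℝ),(0:ℝ)), (-2,0)}) 0 1 0 (fun v hv => by
        simp only [Set.mem_insert_iff, Set.mem_singleton_iff] at hv
        rcases hv with rfl | rfl <;> norm_num) u hu
      linarith
    have h3 : -u.2 ≤ 0 := by
      have := hull_le (s := {((2:ℝ),(0:ℝ)), (-2,0)}) 0 (-1) 0 (fun v hv => by
        simp only [Set.mem_insert_iff, Set.mem_singleton_iff] at hv
        rcases hv with rfl | rfl <;> norm_num) u hu
      linarith
    have hge : dot2 (2, 0) g ≤ dot2 u g := hmax _ hv
    simp only [dot2] at hge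
    have e2 : u.2 = 0 := by linarith
    have e1 : u.1 = 2 := by nlinarith
    exact Prod.ext e1 e2
  · rintro rfl; exact ⟨hv, hub⟩

theorem stmt8 (g : ℝ × ℝ) (hx : 0 < g.1) (hy : 2 * g.1 < g.2) :
    polyConv Ω0 g = convexHull ℝ {(-1, 1), (1, 2), (2, 0)} := by
  have hU : (⋃ P ∈ Ω0, argmax2 P g) =
      ({((1:ℝ),(1:ℝ)), (-1,1), (1,2), (2,0)} : Set (ℝ × ℝ)) := by
    simp only [Ω0, Set.biUnion_insert, Set.biUnion_singleton,
      arg1 g hx hy, arg2 g hx hy, arg3 g hx hy, arg4 g hx hy]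
    ext u; simp [or_assoc]; tauto
  rw [polyConv, hU]
  apply le_antisymm
  · apply convexHull_min _ (convex_convexHull ℝ _)
    intro v hv
    simp only [Set.mem_insert_iff, Set.mem_singleton_iff] at hv
    rcases hv with rfl | rfl | rfl | rfl
    · -- (1,1) = (1/5)•(-1,1) + (4/5)•((1/2)•(1,2)+(1/2)•(2,0))
      have hc := convex_convexHull ℝ ({((-1:ℝ),(1:ℝ)), (1,2), (2,0)} : Set (ℝ × ℝ))
      have hb : ((1:ℝ),(2:ℝ)) ∈ convexHull ℝ ({((-1:ℝ),(1:ℝ)), (1,2), (2,0)} : Set (ℝ × ℝ)) :=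
        subset_convexHull ℝ _ (by simp)
      have hcc : ((2:ℝ),(0:ℝ)) ∈ convexHull ℝ ({((-1:ℝ),(1:ℝ)), (1,2), (2,0)} : Set (ℝ × ℝ)) :=
        subset_convexHull ℝ _ (by simp)
      have ha : ((-1:ℝ),(1:ℝ)) ∈ convexHull ℝ ({((-1:ℝ),(1:ℝ)), (1,2), (2,0)} : Set (ℝ × ℝ)) :=
        subset_convexHull ℝ _ (by simp)
      have hm : ((3/2 : ℝ), (1:ℝ)) ∈ convexHull ℝ ({((-1:ℝ),(1:ℝ)), (1,2), (2,0)} : Set (ℝ × ℝ)) := by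
        have := hc hb hcc (by norm_num : (0:ℝ) ≤ 1/2) (by norm_num : (0:ℝ) ≤ 1/2) (by norm_num)
        convert this using 1
        simp [Prod.ext_iff]; norm_num
      have := hc ha hm (by norm_num : (0:ℝ) ≤ 1/5) (by norm_num : (0:ℝ) ≤ 4/5) (by norm_num)
      convert this using 1
      simp [Prod.ext_iff]; norm_num
    · exact subset_convexHull ℝ _ (by simp)
    · exact subset_convexHull ℝ _ (by simp)
    · exact subset_convexHull ℝ _ (by simp)
  · exact convexHull_mono (by intro v hv; simp at hv ⊢; tauto)
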